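/- arXiv:1702.03093 — 3 statements merged into one kernel-verified Lean document; each statement's English description precedes it below -/
import Mathlib

section
/- Fix a subset τ ⊆ Δ of the simple roots. Define the point e_τ ∈ Hom_Mon(⟨Φ⁻⟩, ℝ_{≥0}) by e_τ(α) = 1 for α in the sub-root-system Φ(L)⁻ = (span_ℤ τ ∩ Φ)⁻ and e_τ(α) = 0 for α ∈ Φ⁻ \ Φ(L)⁻. Then e_τ is a well-defined monoid homomorphism from ⟨Φ⁻⟩ to (ℝ_{≥0}, ×): i.e., the assignment extends consistently to all of ⟨Φ⁻⟩. -/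
open scoped NNReal

lemma finsuppSum_of_multiset {X : Type*} [AddCommGroup X] [DecidableEq X] (m : Multiset X) :
    ((m.toFinsupp.mapRange (Nat.cast : ℕ → ℤ) (by simp)) : X →₀ ℤ).sum (fun x r => r • x)
      = m.sum := by
  induction m using Multiset.induction_on with
  | empty => simp
  | cons a s ih =>
    have h1 : (a ::ₘ s) = {a} + s := by simp
    rw [h1, Multiset.toFinsupp_add, Multiset.toFinsupp_singleton]
    rw [Finsupp.mapRange_add (by simp)]
    rw [Finsupp.sum_add_index (by simp) (by intro x _ r1 r2; exact add_smul r1 r2 x)]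
    rw [ih]
    simp [Finsupp.mapRange_single, Finsupp.sum_single_index, Multiset.sum_cons]

lemma aux_key {X : Type*} [AddCommGroup X] {Δ τ : Set X}
    (hind : LinearIndependent ℤ (fun a : Δ => (a : X))) (hτ : τ ⊆ Δ)
    (l : Multiset X) (hl : ∀ y ∈ l, y ∈ (fun a => -a) '' Δ)
    (hs : l.sum ∈ AddSubgroup.closure τ) : ∀ y ∈ l, -y ∈ τ := by
  classical
  set m : Multiset X := l.map Neg.neg with hm
  have hmΔ : ∀ x ∈ m, x ∈ Δ := by
    intro x hx
    obtain ⟨y, hy, rfl⟩ := Multiset.mem_map.mp hx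
    obtain ⟨a, ha, rfl⟩ := hl y hy
    simpa using ha
  have hmsum : m.sum = -l.sum := by
    rw [hm, Multiset.sum_map_neg']
  -- closure τ ⊆ span ℤ τ
  have hle : AddSubgroup.closure τ ≤ (Submodule.span ℤ τ).toAddSubgroup := by
    apply AddSubgroup.closure_le _ |>.mpr
    intro x hx
    exact Submodule.subset_span hx
  have hspan : m.sum ∈ Submodule.span ℤ τ := by
    rw [hmsum]
    exact neg_mem (hle hs)
  obtain ⟨c, hcsupp, hcsum⟩ := Submodule.mem_span_set.mp hspan
  set n : X →₀ ℤ := m.toFinsupp.mapRange (Nat.cast : ℕ → ℤ) (by simp) with hn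
  have hnsum : n.sum (fun x r => r • x) = m.sum := finsuppSum_of_multiset m
  have hnsupp : (n.support : Set X) ⊆ Δ := by
    intro x hx
    have : x ∈ m.toFinsupp.support := by
      have := Finsupp.support_mapRange (f := (Nat.cast : ℕ → ℤ)) (hf := by simp)
        (g := m.toFinsupp)
      exact this hx
    rw [Multiset.toFinsupp_support] at this
    exact hmΔ x (Multiset.mem_toFinset.mp this)
  have hdiff : n - c = 0 := by
    have hsubt := linearIndepOn_iff.mp (linearIndependent_subtype_iff.mp hind)
    apply hsubt
    · rw [Finsupp.mem_supported]
      refine Set.Subset.trans ?_ (le_refl _)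
      intro x hx
      have hx' := Finsupp.support_sub hx
      rcases Finset.mem_union.mp hx' with h | h
      · exact hnsupp h
      · exact hτ (hcsupp h)
    · rw [Finsupp.linearCombination_apply]
      have : (n - c).sum (fun x r => r • x) = n.sum (fun x r => r • x) - c.sum (fun x r => r • x) := by
        apply Finsupp.sum_sub_index
        intro x r1 r2; exact sub_smul r1 r2 x
      simp [this, hnsum, hcsum]
  have hnc : n = c := by
    have := sub_eq_zero.mp hdiff
    exact this
  intro y hy
  have hym : -y ∈ m := Multiset.mem_map_of_mem Neg.neg hy
  have hcount : m.count (-y) ≠ 0 := by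
    simpa [Multiset.count_pos] using Multiset.count_pos.mpr hym
  have hns : -y ∈ n.support := by
    rw [Finsupp.mem_support_iff, hn, Finsupp.mapRange_apply, Multiset.toFinsupp_apply]
    exact_mod_cast hcount
  have : -y ∈ c.support := by rwa [hnc] at hns
  exact hcsupp this

/-- for a subset τ of the simple roots Δ, the point `e_τ`, defined by
`e_τ(χ) = 1` if χ lies in the ℤ-span of τ and `e_τ(χ) = 0` otherwise, is a well-defined
monoid homomorphism from `⟨Φ⁻⟩` to `(ℝ_{≥0}, ×)`: it sends 0 to 1, is multiplicative on
`⟨Φ⁻⟩`, and takes the prescribed values 1 on `Φ(L)⁻ = Φ⁻ ∩ ℤ-span(τ)` and 0 on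
`Φ⁻ \ Φ(L)⁻`. -/
theorem stmt6 (X : Type*) [AddCommGroup X]
    (Δ : Set X) (hind : LinearIndependent ℤ (fun a : Δ => (a : X)))
    (τ : Set X) (hτ : τ ⊆ Δ)
    (Φminus : Set X)
    (hΦ : Φminus ⊆ (AddSubmonoid.closure ((fun a => -a) '' Δ) : Set X))
    (M : AddSubmonoid X) (hM : M = AddSubmonoid.closure Φminus)
    (e : X → ℝ≥0)
    (he1 : ∀ χ ∈ AddSubgroup.closure τ, e χ = 1)
    (he0 : ∀ χ ∉ AddSubgroup.closure τ, e χ = 0) :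
    e 0 = 1 ∧
    (∀ a ∈ M, ∀ b ∈ M, e (a + b) = e a * e b) ∧
    (∀ α ∈ Φminus, α ∈ AddSubgroup.closure τ → e α = 1) ∧
    (∀ α ∈ Φminus, α ∉ AddSubgroup.closure τ → e α = 0) := by
  have hMle : M ≤ AddSubmonoid.closure ((fun a => -a) '' Δ) := by
    rw [hM]
    exact AddSubmonoid.closure_le.mpr hΦ
  refine ⟨he1 0 (zero_mem _), ?_, fun α _ h => he1 α h, fun α _ h => he0 α h⟩
  intro a ha b hb
  by_cases hab : a + b ∈ AddSubgroup.closure τ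
  · -- both a and b are in closure τ
    obtain ⟨la, hla, hlasum⟩ := AddSubmonoid.exists_multiset_of_mem_closure
      (AddSubmonoid.mem_closure.mpr (fun S hS => (AddSubmonoid.closure_le.mpr hS) (hMle ha)))
    obtain ⟨lb, hlb, hlbsum⟩ := AddSubmonoid.exists_multiset_of_mem_closure
      (AddSubmonoid.mem_closure.mpr (fun S hS => (AddSubmonoid.closure_le.mpr hS) (hMle hb)))
    have hsum : (la + lb).sum = a + b := by rw [Multiset.sum_add, hlasum, hlbsum]
    have hall : ∀ y ∈ la + lb, -y ∈ τ := by
      apply aux_key hind hτ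
      · intro y hy
        rcases Multiset.mem_add.mp hy with h | h
        · exact hla y h
        · exact hlb y h
      · rwa [hsum]
    have mem_of : ∀ (l : Multiset X), (∀ y ∈ l, -y ∈ τ) → l.sum ∈ AddSubgroup.closure τ := by
      intro l hl
      refine multiset_sum_mem _ (fun y hy => ?_)
      have : -y ∈ AddSubgroup.closure τ := AddSubgroup.subset_closure (hl y hy)
      simpa using neg_mem this
    have haτ : a ∈ AddSubgroup.closure τ := by
      rw [← hlasum]; exact mem_of la (fun y hy => hall y (Multiset.mem_add.mpr (Or.inl hy)))
    have hbτ : b ∈ AddSubgroup.closure τ := by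
      rw [← hlbsum]; exact mem_of lb (fun y hy => hall y (Multiset.mem_add.mpr (Or.inr hy)))
    rw [he1 _ hab, he1 _ haτ, he1 _ hbτ, mul_one]
  · rw [he0 _ hab]
    by_cases haτ : a ∈ AddSubgroup.closure τ
    · have hbτ : b ∉ AddSubgroup.closure τ := fun h => hab (add_mem haτ h)
      rw [he0 _ hbτ, mul_zero]
    · rw [he0 _ haτ, zero_mul]
end

section
/- For τ ⊆ Δ, the stratum Z(τ) := { z ∈ Hom_Mon(⟨Φ⁻⟩, ℝ_{≥0}) : z(α) = 0 for all α ∈ Φ⁻ \ Φ(L)⁻ and z(α) ≠ 0 for all α ∈ Φ(L)⁻ } is stable under the natural action of Λ = Hom_Ab(X*(T), ℝ_{>0}) by pointwise multiplication, and the stabilizer of each point of Z(τ) is Λ(τ) := { x ∈ Λ : x(α) = 1 for all α ∈ Φ(L) }, so that Z(τ) is a torsor under Λ/Λ(τ), trivialized by the point e_τ. -/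
open scoped NNReal

section
variable {X : Type*} [AddCommGroup X]

/-- An element of `Λ = Hom_Ab(X*(T), ℝ_{>0})`: a group homomorphism into the
positive reals, modelled as a multiplicative nowhere-vanishing `ℝ≥0`-valued function. -/
def IsLamHom (x : X → ℝ≥0) : Prop :=
  (∀ a b, x (a + b) = x a * x b) ∧ ∀ a, x a ≠ 0

/-- An element of `Λ̄ = Hom_Mon(⟨Φ⁻⟩, ℝ_{≥0})`: a function which is a monoid
homomorphism on the submonoid `M = ⟨Φ⁻⟩`. -/
def IsLamBarHom (M : AddSubmonoid X) (z : X → ℝ≥0) : Prop :=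
  z 0 = 1 ∧ ∀ a ∈ M, ∀ b ∈ M, z (a + b) = z a * z b

/-- Membership in the stratum `Z(τ)`: a monoid homomorphism on `M = ⟨Φ⁻⟩` which is
nonzero exactly on the negative roots lying in the ℤ-span of τ (i.e. on `Φ(L)⁻`),
and zero on `Φ⁻ \ Φ(L)⁻`. -/
def MemZ (M : AddSubmonoid X) (Φminus : Set X) (τ : Set X) (z : X → ℝ≥0) : Prop :=
  IsLamBarHom M z ∧ ∀ α ∈ Φminus, (z α ≠ 0 ↔ α ∈ AddSubgroup.closure τ)

end


lemma span_key {X : Type*} [AddCommGroup X]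
    (Δ : Set X) (hind : LinearIndependent ℤ (fun a : Δ => (a : X)))
    (τ : Set X) (hτ : τ ⊆ Δ) :
    ∀ a b : X, a ∈ AddSubmonoid.closure ((fun a => -a) '' Δ) →
      b ∈ AddSubmonoid.closure ((fun a => -a) '' Δ) →
      a + b ∈ AddSubgroup.closure τ → a ∈ AddSubgroup.closure τ := by
  classical
  set P := Submodule.span ℤ (Set.range (fun a : Δ => (a : X))) with hPdef
  have hrange : Set.range (fun a : Δ => (a : X)) = Δ := Subtype.range_coe
  have hΔP : ∀ d ∈ Δ, d ∈ P := fun d hd => Submodule.subset_span (hrange.symm ▸ hd)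
  set B := Module.Basis.span hind with hBdef
  have hBval : ∀ (d : Δ), ((B d : P) : X) = (d : X) := fun d => congrArg Subtype.val (Module.Basis.span_apply hind d)
  have hnegP : ∀ χ ∈ AddSubmonoid.closure ((fun a => -a) '' Δ), χ ∈ P := by
    intro χ hχ
    refine AddSubmonoid.closure_induction (fun x hx => ?_) (zero_mem P)
      (fun x y _ _ hx hy => add_mem hx hy) hχ
    obtain ⟨d, hd, rfl⟩ := hx
    exact neg_mem (hΔP d hd)
  have hτP : ∀ χ ∈ AddSubgroup.closure τ, χ ∈ P := by
    intro χ hχ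
    refine AddSubgroup.closure_induction (fun x hx => hΔP x (hτ hx)) (zero_mem P)
      (fun x y _ _ hx hy => add_mem hx hy) (fun x _ hx => neg_mem hx) hχ
  have hRC : ∀ χ, χ ∈ AddSubmonoid.closure ((fun a => -a) '' Δ) →
      ∀ (hP : χ ∈ P) (c : Δ), B.repr ⟨χ, hP⟩ c ≤ 0 := by
    intro χ hχ
    refine AddSubmonoid.closure_induction
      (motive := fun x _ => ∀ (hP : x ∈ P) (c : Δ), B.repr ⟨x, hP⟩ c ≤ 0) ?_ ?_ ?_ hχ
    · rintro x ⟨d, hd, rfl⟩ hP c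
      have h1 : (⟨-d, hP⟩ : P) = -(B ⟨d, hd⟩) := by
        apply Subtype.ext
        simp [hBval ⟨d, hd⟩]
      rw [h1, map_neg, Finsupp.neg_apply, Module.Basis.repr_self, Finsupp.single_apply]
      split_ifs <;> simp
    · intro hP c
      have h0 : (⟨(0:X), hP⟩ : P) = 0 := rfl
      rw [h0, map_zero]
      simp
    · intro x y hx hy ihx ihy hP c
      have h1 : (⟨x + y, hP⟩ : P) = ⟨x, hnegP x hx⟩ + ⟨y, hnegP y hy⟩ := rfl
      rw [h1, map_add, Finsupp.add_apply]
      exact add_nonpos (ihx _ c) (ihy _ c)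
  have hRT : ∀ χ, χ ∈ AddSubgroup.closure τ →
      ∀ (hP : χ ∈ P) (c : Δ), (c : X) ∉ τ → B.repr ⟨χ, hP⟩ c = 0 := by
    intro χ hχ
    refine AddSubgroup.closure_induction
      (p := fun x _ => ∀ (hP : x ∈ P) (c : Δ), (c : X) ∉ τ → B.repr ⟨x, hP⟩ c = 0) ?_ ?_ ?_ ?_ hχ
    · intro t ht hP c hc
      have h1 : (⟨t, hP⟩ : P) = B ⟨t, hτ ht⟩ := Subtype.ext (hBval ⟨t, hτ ht⟩).symm
      rw [h1, Module.Basis.repr_self, Finsupp.single_apply, if_neg]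
      intro h
      exact hc (by rw [← h]; exact ht)
    · intro hP c hc
      have h0 : (⟨(0:X), hP⟩ : P) = 0 := rfl
      rw [h0, map_zero]; simp
    · intro x y hx hy ihx ihy hP c hc
      have h1 : (⟨x + y, hP⟩ : P) = ⟨x, hτP x hx⟩ + ⟨y, hτP y hy⟩ := rfl
      rw [h1, map_add, Finsupp.add_apply, ihx _ c hc, ihy _ c hc, add_zero]
    · intro x hx ihx hP c hc
      have h1 : (⟨-x, hP⟩ : P) = -⟨x, hτP x hx⟩ := rfl
      rw [h1, map_neg, Finsupp.neg_apply, ihx _ c hc, neg_zero]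
  have hTC : ∀ χ (hP : χ ∈ P), (∀ c : Δ, (c : X) ∉ τ → B.repr ⟨χ, hP⟩ c = 0) →
      χ ∈ AddSubgroup.closure τ := by
    intro χ hP h
    have h1 : ((Finsupp.linearCombination ℤ (B : Δ → P)) (B.repr ⟨χ, hP⟩) : X) = χ :=
      congrArg Subtype.val (B.linearCombination_repr ⟨χ, hP⟩)
    rw [Finsupp.linearCombination_apply] at h1
    have h2 := h1.symm
    rw [Finsupp.sum, AddSubmonoidClass.coe_finset_sum] at h2
    rw [h2]
    refine AddSubgroup.sum_mem _ (fun c hc => ?_)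
    rw [Submodule.coe_smul, hBval c]
    by_cases hcτ : (c : X) ∈ τ
    · exact zsmul_mem (AddSubgroup.subset_closure hcτ) _
    · rw [h c hcτ, zero_smul]
      exact zero_mem _
  intro a b ha hb hab
  have haP := hnegP a ha
  have hbP := hnegP b hb
  refine hTC a haP (fun c hc => ?_)
  have h0 : B.repr ⟨a + b, add_mem haP hbP⟩ c = 0 := hRT _ hab _ c hc
  have h1 : (⟨a + b, add_mem haP hbP⟩ : P) = ⟨a, haP⟩ + ⟨b, hbP⟩ := rfl
  rw [h1, map_add, Finsupp.add_apply] at h0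
  have h2 := hRC a ha haP c
  have h3 := hRC b hb hbP c
  omega

/-- the stratum `Z(τ)` is stable under the action of
`Λ = Hom_Ab(X*(T), ℝ_{>0})` by pointwise multiplication; the action of Λ on `Z(τ)` is
transitive; the stabilizer of each point of `Z(τ)` is
`Λ(τ) = { x ∈ Λ : x(α) = 1 for all α ∈ Φ(L) }` (so `Z(τ)` is a torsor under `Λ/Λ(τ)`);
and `Z(τ)` is trivialized by the point `e_τ`. -/
theorem stmt8 (X : Type*) [AddCommGroup X]
    (Δ : Set X) (hind : LinearIndependent ℤ (fun a : Δ => (a : X)))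
    (τ : Set X) (hτ : τ ⊆ Δ)
    (Φplus Φminus : Set X) (hpm : Φplus = (fun a => -a) '' Φminus)
    (hΔΦ : (fun a => -a) '' Δ ⊆ Φminus)
    (hΦ : Φminus ⊆ (AddSubmonoid.closure ((fun a => -a) '' Δ) : Set X))
    (M : AddSubmonoid X) (hM : M = AddSubmonoid.closure Φminus)
    (etau : X → ℝ≥0)
    (het1 : ∀ χ ∈ AddSubgroup.closure τ, etau χ = 1)
    (het0 : ∀ χ ∉ AddSubgroup.closure τ, etau χ = 0) :
    (∀ x z, IsLamHom x → MemZ M Φminus τ z → MemZ M Φminus τ (fun χ => x χ * z χ)) ∧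
    (∀ z z', MemZ M Φminus τ z → MemZ M Φminus τ z' →
      ∃ x, IsLamHom x ∧ ∀ χ ∈ M, x χ * z χ = z' χ) ∧
    (∀ z x, MemZ M Φminus τ z → IsLamHom x →
      ((∀ χ ∈ M, x χ * z χ = z χ) ↔
        ∀ α ∈ (Φplus ∪ Φminus) ∩ (AddSubgroup.closure τ : Set X), x α = 1)) ∧
    MemZ M Φminus τ etau := by
  classical
  -- a LamHom takes value 1 at 0
  have lam0 : ∀ x : X → ℝ≥0, IsLamHom x → x 0 = 1 := by
    intro x hx
    have h := hx.1 0 0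
    rw [add_zero] at h
    exact (mul_left_cancel₀ (hx.2 0) (show x 0 * 1 = x 0 * x 0 by rw [mul_one]; exact h)).symm
  set N : AddSubmonoid X :=
    AddSubmonoid.closure (Φminus ∩ (AddSubgroup.closure τ : Set X)) with hN
  have hNM : N ≤ M := by
    rw [hN, hM]
    exact AddSubmonoid.closure_le.mpr (fun x hx => AddSubmonoid.subset_closure hx.1)
  have hnzN : ∀ z, MemZ M Φminus τ z → ∀ χ ∈ N, z χ ≠ 0 := by
    intro z hz χ hχ
    rw [hN] at hχ
    refine AddSubmonoid.closure_induction (motive := fun x _ => z x ≠ 0)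
      (fun x hx => (hz.2 x hx.1).mpr hx.2)
      (show z 0 ≠ 0 by rw [hz.1.1]; exact one_ne_zero)
      (fun x y hx hy ihx ihy => ?_) hχ
    have hxM : x ∈ M := hNM (by rw [hN]; exact hx)
    have hyM : y ∈ M := hNM (by rw [hN]; exact hy)
    show z (x + y) ≠ 0
    rw [hz.1.2 x hxM y hyM]
    exact mul_ne_zero ihx ihy
  have hMnz : ∀ z, MemZ M Φminus τ z → ∀ χ ∈ M, z χ ≠ 0 → χ ∈ N := by
    intro z hz χ hχ
    rw [hM] at hχ
    refine AddSubmonoid.closure_induction (motive := fun x _ => z x ≠ 0 → x ∈ N)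
      (fun x hx h => by rw [hN]; exact AddSubmonoid.subset_closure ⟨hx, (hz.2 x hx).mp h⟩)
      (fun _ => zero_mem N)
      (fun x y hx hy ihx ihy h => ?_) hχ
    have hxM : x ∈ M := by rw [hM]; exact hx
    have hyM : y ∈ M := by rw [hM]; exact hy
    replace h : z (x + y) ≠ 0 := h
    rw [hz.1.2 x hxM y hyM] at h
    exact add_mem (ihx (left_ne_zero_of_mul h)) (ihy (right_ne_zero_of_mul h))
  have hMneg : ∀ χ ∈ M, χ ∈ AddSubmonoid.closure ((fun a => -a) '' Δ) := by
    intro χ hχ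
    rw [hM] at hχ
    exact AddSubmonoid.closure_le.mpr hΦ hχ
  -- Part 1: stability
  have part1 : ∀ x z, IsLamHom x → MemZ M Φminus τ z → MemZ M Φminus τ (fun χ => x χ * z χ) := by
    intro x z hx hz
    refine ⟨⟨by simp [lam0 x hx, hz.1.1], fun a ha b hb => ?_⟩, fun α hα => ?_⟩
    · simp only
      rw [hx.1, hz.1.2 a ha b hb]
      ring
    · simp only
      constructor
      · intro h
        exact (hz.2 α hα).mp (right_ne_zero_of_mul h)
      · intro h
        exact mul_ne_zero (hx.2 α) ((hz.2 α hα).mpr h)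
  -- Part 2: transitivity
  have part2 : ∀ z z', MemZ M Φminus τ z → MemZ M Φminus τ z' →
      ∃ x, IsLamHom x ∧ ∀ χ ∈ M, x χ * z χ = z' χ := by
    intro z z' hz hz'
    set v : X → ℝ := fun χ => Real.log (z' χ : ℝ) - Real.log (z χ : ℝ) with hv
    have vadd : ∀ a ∈ N, ∀ b ∈ N, v (a + b) = v a + v b := by
      intro a ha b hb
      have h1 : z (a + b) = z a * z b := hz.1.2 a (hNM ha) b (hNM hb)
      have h2 : z' (a + b) = z' a * z' b := hz'.1.2 a (hNM ha) b (hNM hb)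
      simp only [hv, h1, h2, NNReal.coe_mul]
      rw [Real.log_mul (by exact_mod_cast hnzN z' hz' a ha) (by exact_mod_cast hnzN z' hz' b hb),
        Real.log_mul (by exact_mod_cast hnzN z hz a ha) (by exact_mod_cast hnzN z hz b hb)]
      ring
    have v0 : v 0 = 0 := by simp [hv, hz.1.1, hz'.1.1]
    have W : ∀ a ∈ N, ∀ b ∈ N, ∀ c ∈ N, ∀ d ∈ N, a - b = c - d → v a - v b = v c - v d := by
      intro a ha b hb c hc d hd habcd
      have h1 : a + d = c + b := sub_eq_sub_iff_add_eq_add.mp habcd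
      have h2 : v a + v d = v c + v b := by
        rw [← vadd a ha d hd, ← vadd c hc b hb, h1]
      linarith
    set S : AddSubgroup X := AddSubgroup.closure (N : Set X) with hS
    have hdecomp : ∀ s : S, ∃ a, a ∈ N ∧ ∃ b, b ∈ N ∧ (s : X) = a - b := by
      rintro ⟨s, hs⟩
      rw [hS] at hs
      simp only
      refine AddSubgroup.closure_induction (p := fun t _ => ∃ a, a ∈ N ∧ ∃ b, b ∈ N ∧ t = a - b)
        (fun t ht => ⟨t, ht, 0, zero_mem N, by simp⟩)
        ⟨0, zero_mem N, 0, zero_mem N, by simp⟩ ?_ ?_ hs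
      · rintro t u _ _ ⟨a, ha, b, hb, htab⟩ ⟨c, hc, d, hd, hucd⟩
        exact ⟨a + c, add_mem ha hc, b + d, add_mem hb hd, by rw [htab, hucd]; abel⟩
      · rintro t _ ⟨a, ha, b, hb, htab⟩
        exact ⟨b, hb, a, ha, by rw [htab]; abel⟩
    choose A hA B hB hAB using hdecomp
    have gadd : ∀ s t : S,
        (v (A (s + t)) - v (B (s + t))) = (v (A s) - v (B s)) + (v (A t) - v (B t)) := by
      intro s t
      have key : v (A (s + t)) - v (B (s + t)) = v (A s + A t) - v (B s + B t) := by
        refine W _ (hA _) _ (hB _) _ (add_mem (hA s) (hA t)) _ (add_mem (hB s) (hB t)) ?_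
        rw [← hAB (s + t)]
        have hst : ((s + t : S) : X) = (s : X) + (t : X) := rfl
        rw [hst, hAB s, hAB t]
        abel
      rw [key, vadd _ (hA s) _ (hA t), vadd _ (hB s) _ (hB t)]
      ring
    obtain ⟨G, hG⟩ := (Module.Baer.of_divisible ℝ).extension_property_addMonoidHom
      S.subtype Subtype.coe_injective (AddMonoidHom.mk' (fun s => v (A s) - v (B s)) gadd)
    have hGN : ∀ χ, ∀ hχ : χ ∈ N, G χ = v χ := by
      intro χ hχ
      have hχS : χ ∈ S := by rw [hS]; exact AddSubgroup.subset_closure hχ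
      have h1 : G χ = v (A ⟨χ, hχS⟩) - v (B ⟨χ, hχS⟩) := by
        have := DFunLike.congr_fun hG ⟨χ, hχS⟩
        simpa using this
      rw [h1]
      have h2 := W _ (hA ⟨χ, hχS⟩) _ (hB ⟨χ, hχS⟩) χ hχ 0 (zero_mem N)
        (by rw [← hAB ⟨χ, hχS⟩]; simp)
      rw [h2, v0, sub_zero]
    refine ⟨fun χ => Real.toNNReal (Real.exp (G χ)), ⟨fun a b => ?_, fun a => ?_⟩, fun χ hχ => ?_⟩
    · show (Real.exp (G (a + b))).toNNReal = (Real.exp (G a)).toNNReal * (Real.exp (G b)).toNNReal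
      rw [map_add, Real.exp_add, Real.toNNReal_mul (Real.exp_pos _).le]
    · exact (Real.toNNReal_pos.mpr (Real.exp_pos _)).ne'
    · by_cases hz0 : z χ = 0
      · have hz'0 : z' χ = 0 := by
          by_contra h
          exact hnzN z hz χ (hMnz z' hz' χ hχ h) hz0
        rw [hz0, hz'0, mul_zero]
      · have hχN : χ ∈ N := hMnz z hz χ hχ hz0
        have hz'0 : z' χ ≠ 0 := hnzN z' hz' χ hχN
        have hzpos : (0 : ℝ) < (z χ : ℝ) := by exact_mod_cast zero_lt_iff.mpr hz0
        have hz'pos : (0 : ℝ) < (z' χ : ℝ) := by exact_mod_cast zero_lt_iff.mpr hz'0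
        apply NNReal.coe_injective
        rw [NNReal.coe_mul, Real.coe_toNNReal _ (Real.exp_pos _).le, hGN χ hχN]
        show Real.exp (Real.log (z' χ : ℝ) - Real.log (z χ : ℝ)) * (z χ : ℝ) = (z' χ : ℝ)
        rw [Real.exp_sub, Real.exp_log hz'pos, Real.exp_log hzpos]
        field_simp
  -- Part 3: stabilizer
  have part3 : ∀ z x, MemZ M Φminus τ z → IsLamHom x →
      ((∀ χ ∈ M, x χ * z χ = z χ) ↔
        ∀ α ∈ (Φplus ∪ Φminus) ∩ (AddSubgroup.closure τ : Set X), x α = 1) := by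
    intro z x hz hx
    constructor
    · intro h α hα
      obtain ⟨hα1, hα2⟩ := hα
      have key : ∀ β ∈ Φminus, β ∈ AddSubgroup.closure τ → x β = 1 := by
        intro β hβ hβτ
        have hβM : β ∈ M := by rw [hM]; exact AddSubmonoid.subset_closure hβ
        have hnz : z β ≠ 0 := (hz.2 β hβ).mpr hβτ
        exact mul_right_cancel₀ hnz (by rw [h β hβM, one_mul])
      rcases hα1 with hp | hm
      · rw [hpm] at hp
        obtain ⟨β, hβ, rfl⟩ := hp
        have hβτ : β ∈ AddSubgroup.closure τ := by
          have := neg_mem hα2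
          rwa [neg_neg] at this
        have h1 : x (-β) * x β = 1 := by
          rw [← hx.1, neg_add_cancel, lam0 x hx]
        rw [key β hβ hβτ, mul_one] at h1
        exact h1
      · exact key α hm hα2
    · intro h χ hχ
      by_cases hz0 : z χ = 0
      · rw [hz0, mul_zero]
      · have hχN : χ ∈ N := hMnz z hz χ hχ hz0
        rw [hN] at hχN
        have hx1 : x χ = 1 :=
          AddSubmonoid.closure_induction (motive := fun y _ => x y = 1)
            (fun y hy => h y ⟨Or.inr hy.1, hy.2⟩) (lam0 x hx)
            (fun a b _ _ iha ihb =>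
              show x (a + b) = 1 by rw [hx.1, iha, ihb, mul_one]) hχN
        rw [hx1, one_mul]
  -- Part 4: e_τ lies in Z(τ)
  have part4 : MemZ M Φminus τ etau := by
    refine ⟨⟨het1 0 (zero_mem _), fun a ha b hb => ?_⟩, fun α hα => ?_⟩
    · by_cases hat : a ∈ AddSubgroup.closure τ
      · by_cases hbt : b ∈ AddSubgroup.closure τ
        · rw [het1 a hat, het1 b hbt, het1 _ (add_mem hat hbt), mul_one]
        · rw [het0 b hbt, mul_zero, het0]
          intro hab
          exact hbt (span_key Δ hind τ hτ b a (hMneg b hb) (hMneg a ha) (by rwa [add_comm]))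
      · rw [het0 a hat, zero_mul, het0]
        intro hab
        exact hat (span_key Δ hind τ hτ a b (hMneg a ha) (hMneg b hb) hab)
    · by_cases hα1 : α ∈ AddSubgroup.closure τ
      · simp [het1 α hα1, hα1]
      · simp [het0 α hα1, hα1]
  exact ⟨part1, part2, part3, part4⟩
end

section
/- Let τ, τ' ⊆ Δ. Then the closure relation on strata of the wonderful compactification corresponds to inclusion of types: with Z(τ) ⊆ Hom_Mon(⟨Φ⁻⟩, ℝ_{≥0}) the strata defined by z(α) ≠ 0 iff α ∈ Φ⁻ ∩ ℤ-span(τ), the topological closure of Z(τ) (in the pointwise-convergence topology) equals the union of Z(τ') over all τ' ⊆ τ. -/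
open scoped NNReal Topology

section S16Aux

variable {X : Type*} [AddCommGroup X]

/-- Auxiliary: a choice of ℕ-coefficients representing `x` as a combination of `-a`, `a ∈ Δ`. -/
noncomputable def s16coeff (Δ : Finset X) (x : X) : X → ℕ :=
  letI := Classical.propDecidable (∃ n : X → ℕ, x = ∑ a ∈ Δ, n a • (-a))
  if h : ∃ n : X → ℕ, x = ∑ a ∈ Δ, n a • (-a) then h.choose else 0

lemma s16coeff_spec {Δ : Finset X} {x : X}
    (h : ∃ n : X → ℕ, x = ∑ a ∈ Δ, n a • (-a)) :
    x = ∑ a ∈ Δ, s16coeff Δ x a • (-a) := by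
  rw [s16coeff]
  split
  · next h' => exact h'.choose_spec
  · next h' => exact absurd h h' 

lemma s16_int_uniq {Δ : Finset X}
    (hind : LinearIndependent ℤ (fun a : (Δ : Set X) => (a : X)))
    {g g' : X → ℤ} (h : ∑ a ∈ Δ, g a • a = ∑ a ∈ Δ, g' a • a) :
    ∀ a ∈ Δ, g a = g' a := by
  have h0 : ∑ a ∈ Δ, (g a - g' a) • a = 0 := by
    simp only [sub_smul, Finset.sum_sub_distrib, h, sub_self]
  intro a ha
  have key := linearIndependent_iff'.mp hind Finset.univ
      (fun i : (Δ : Set X) => g i - g' i) ?_ ⟨a, ha⟩ (Finset.mem_univ _)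
  · exact sub_eq_zero.mp key
  · rw [← h0]
    exact Finset.sum_finset_coe (fun x => (g x - g' x) • x) Δ

lemma s16_neg_sum {Δ : Finset X} (n : X → ℕ) :
    ∑ a ∈ Δ, n a • (-a) = ∑ a ∈ Δ, (-(n a : ℤ)) • a := by
  refine Finset.sum_congr rfl fun a _ => ?_
  rw [smul_neg, neg_smul, natCast_zsmul]

lemma s16_nat_uniq {Δ : Finset X}
    (hind : LinearIndependent ℤ (fun a : (Δ : Set X) => (a : X)))
    {n n' : X → ℕ} (h : ∑ a ∈ Δ, n a • (-a) = ∑ a ∈ Δ, n' a • (-a)) :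
    ∀ a ∈ Δ, n a = n' a := by
  intro a ha
  have h' : ∑ a ∈ Δ, (-(n a : ℤ)) • a = ∑ a ∈ Δ, (-(n' a : ℤ)) • a := by
    rw [← s16_neg_sum, ← s16_neg_sum, h]
  have := s16_int_uniq hind h' a ha
  exact_mod_cast neg_injective this

end S16Aux

/-- closure of strata. In `Λ̄ = Hom_Mon(⟨Φ⁻⟩, ℝ_{≥0})` with the topology
of pointwise convergence, let `Z(σ)` be the stratum of those z with `z(α) ≠ 0` iff
`α ∈ Φ⁻ ∩ ℤ-span(σ)`. Then for τ ⊆ Δ, the topological closure of `Z(τ)` equals the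
union of the `Z(τ')` over all τ' ⊆ τ. -/
theorem stmt16 (X : Type*) [AddCommGroup X]
    (Δ : Finset X) (hind : LinearIndependent ℤ (fun a : (Δ : Set X) => (a : X)))
    (Φminus : Set X)
    (hΔΦ : (fun a => -a) '' (Δ : Set X) ⊆ Φminus)
    (hΦ : Φminus ⊆ (AddSubmonoid.closure ((fun a => -a) '' (Δ : Set X)) : Set X))
    (M : AddSubmonoid X) (hM : M = AddSubmonoid.closure Φminus)
    (hmem : ∀ α ∈ Φminus, α ∈ M)
    (τ : Finset X) (hτ : τ ⊆ Δ)
    (Z : Finset X →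
      Set {z : ↥M → ℝ≥0 // z 0 = 1 ∧ ∀ a b : ↥M, z (a + b) = z a * z b})
    (hZ : ∀ σ : Finset X, Z σ = {z | ∀ α, ∀ hα : α ∈ Φminus,
        (z.1 ⟨α, hmem α hα⟩ ≠ 0 ↔ α ∈ AddSubgroup.closure (σ : Set X))}) :
    closure (Z τ) = ⋃ σ ∈ {σ : Finset X | σ ⊆ τ}, Z σ := by
  classical
  -- every element of M is an ℕ-combination of the -a, a ∈ Δ
  have hMle : ∀ m : ↥M, (m : X) ∈ AddSubmonoid.closure ((fun a => -a) '' (Δ : Set X)) := by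
    intro m
    have hm : (m : X) ∈ AddSubmonoid.closure Φminus := by rw [← hM]; exact m.2
    exact AddSubmonoid.closure_le.mpr hΦ hm
  have hrep : ∀ m : ↥M, ∃ nn : X → ℕ, (m : X) = ∑ a ∈ Δ, nn a • (-a) := by
    intro m
    refine AddSubmonoid.closure_induction ?_ ?_ ?_ (hMle m)
    · rintro x ⟨a, ha, rfl⟩
      have ha' : a ∈ Δ := ha
      refine ⟨fun b => if b = a then 1 else 0, ?_⟩
      simp [ite_smul, Finset.sum_ite_eq' Δ a, ha']
    · exact ⟨0, by simp⟩
    · rintro x y _ _ ⟨n₁, h₁⟩ ⟨n₂, h₂⟩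
      refine ⟨n₁ + n₂, ?_⟩
      rw [h₁, h₂, ← Finset.sum_add_distrib]
      exact Finset.sum_congr rfl fun a _ => (add_smul _ _ _).symm
  have coeff_spec : ∀ m : ↥M, (m : X) = ∑ a ∈ Δ, s16coeff Δ (m : X) a • (-a) :=
    fun m => s16coeff_spec (hrep m)
  have coeff_uniq : ∀ (m : ↥M) (nn : X → ℕ), (m : X) = ∑ a ∈ Δ, nn a • (-a) →
      ∀ a ∈ Δ, s16coeff Δ (m : X) a = nn a :=
    fun m nn h => s16_nat_uniq hind ((coeff_spec m).symm.trans h)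
  have coeff_add : ∀ p q : ↥M, ∀ a ∈ Δ,
      s16coeff Δ ((p + q : ↥M) : X) a = s16coeff Δ (p : X) a + s16coeff Δ (q : X) a := by
    intro p q
    refine coeff_uniq (p + q) _ ?_
    conv_lhs => rw [show ((p + q : ↥M) : X) = (p : X) + (q : X) from rfl,
      coeff_spec p, coeff_spec q]
    rw [← Finset.sum_add_distrib]
    exact Finset.sum_congr rfl fun a _ => (add_smul _ _ _).symm
  have coeff_zero : ∀ a ∈ Δ, s16coeff Δ ((0 : ↥M) : X) a = 0 :=
    coeff_uniq 0 0 (by simp)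
  -- the elements -a of M, for a ∈ Δ
  have hnegΦ : ∀ a ∈ Δ, -a ∈ Φminus := fun a ha => hΔΦ ⟨a, ha, rfl⟩
  set negM : X → ↥M := fun a => if h : -a ∈ Φminus then ⟨-a, hmem _ h⟩ else 0 with hnegM
  have negM_coe : ∀ a ∈ Δ, ((negM a : ↥M) : X) = -a := by
    intro a ha
    rw [hnegM]
    simp [hnegΦ a ha]
  have coeff_negM : ∀ b ∈ Δ, ∀ a ∈ Δ,
      s16coeff Δ ((negM b : ↥M) : X) a = if a = b then 1 else 0 := by
    intro b hb
    refine coeff_uniq (negM b) _ ?_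
    rw [negM_coe b hb]
    simp [ite_smul, Finset.sum_ite_eq' Δ b, hb]
  -- multiplicative evaluation of homs
  have hom_sum : ∀ (z : {z : ↥M → ℝ≥0 // z 0 = 1 ∧ ∀ a b : ↥M, z (a + b) = z a * z b})
      (s : Finset X) (f : X → ↥M), z.1 (∑ i ∈ s, f i) = ∏ i ∈ s, z.1 (f i) := by
    intro z s f
    induction s using Finset.cons_induction with
    | empty => simpa using z.2.1
    | cons a s ha ih => rw [Finset.sum_cons, Finset.prod_cons, z.2.2, ih]
  have hom_smul : ∀ (z : {z : ↥M → ℝ≥0 // z 0 = 1 ∧ ∀ a b : ↥M, z (a + b) = z a * z b})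
      (k : ℕ) (x : ↥M), z.1 (k • x) = z.1 x ^ k := by
    intro z k x
    induction k with
    | zero => simpa using z.2.1
    | succ k ih => rw [succ_nsmul, z.2.2, ih, pow_succ]
  have msum : ∀ m : ↥M, m = ∑ a ∈ Δ, s16coeff Δ (m : X) a • negM a := by
    intro m
    apply Subtype.ext
    rw [AddSubmonoid.coe_finset_sum]
    calc (m : X) = ∑ a ∈ Δ, s16coeff Δ (m : X) a • (-a) := coeff_spec m
      _ = _ := by
        refine Finset.sum_congr rfl fun a ha => ?_
        rw [show ((s16coeff Δ (m : X) a • negM a : ↥M) : X)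
            = s16coeff Δ (m : X) a • ((negM a : ↥M) : X) from rfl, negM_coe a ha]
  have heval : ∀ (z : {z : ↥M → ℝ≥0 // z 0 = 1 ∧ ∀ a b : ↥M, z (a + b) = z a * z b})
      (m : ↥M), z.1 m = ∏ a ∈ Δ, z.1 (negM a) ^ s16coeff Δ (m : X) a := by
    intro z m
    conv_lhs => rw [msum m]
    rw [hom_sum]
    exact Finset.prod_congr rfl fun a _ => hom_smul z _ _
  -- construction of homs from coefficient data
  set Fc : (X → ℝ≥0) → ↥M → ℝ≥0 := fun c m => ∏ a ∈ Δ, c a ^ s16coeff Δ (m : X) a with hFc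
  have F_zero : ∀ c, Fc c 0 = 1 := by
    intro c
    rw [hFc]
    exact Finset.prod_eq_one fun a ha => by rw [coeff_zero a ha, pow_zero]
  have F_add : ∀ c, ∀ p q : ↥M, Fc c (p + q) = Fc c p * Fc c q := by
    intro c p q
    rw [hFc]
    simp only
    rw [← Finset.prod_mul_distrib]
    exact Finset.prod_congr rfl fun a ha => by rw [coeff_add p q a ha, pow_add]
  have F_negM : ∀ c, ∀ b ∈ Δ, Fc c (negM b) = c b := by
    intro c b hb
    rw [hFc]
    simp only
    have : ∀ a ∈ Δ, c a ^ s16coeff Δ ((negM b : ↥M) : X) a = if a = b then c a else 1 := by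
      intro a ha
      rw [coeff_negM b hb a ha]
      split <;> simp
    rw [Finset.prod_congr rfl this, Finset.prod_ite_eq' Δ b, if_pos hb]
  -- span membership in terms of coefficients
  have span_iff : ∀ σ : Finset X, σ ⊆ τ → ∀ m : ↥M,
      ((m : X) ∈ AddSubgroup.closure (σ : Set X) ↔
        ∀ a ∈ Δ, a ∉ σ → s16coeff Δ (m : X) a = 0) := by
    intro σ hστ m
    have hσΔ : σ ⊆ Δ := hστ.trans hτ
    constructor
    · intro hcl
      have hsp : (m : X) ∈ Submodule.span ℤ (σ : Set X) :=
        (AddSubgroup.closure_le ((Submodule.span ℤ (σ : Set X)).toAddSubgroup)).mpr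
          Submodule.subset_span hcl
      obtain ⟨f, -, hf⟩ := Submodule.mem_span_finset.mp hsp
      set g : X → ℤ := fun a => if a ∈ σ then f a else 0 with hg
      have hsum : ∑ a ∈ Δ, g a • a = ∑ a ∈ Δ, (-(s16coeff Δ (m : X) a : ℤ)) • a := by
        rw [← s16_neg_sum, ← coeff_spec m, ← hf]
        rw [← Finset.sum_subset hσΔ (fun x _ hx => by simp [hg, hx])]
        exact Finset.sum_congr rfl fun a ha => by simp [hg, ha]
      intro a ha has
      have := s16_int_uniq hind hsum a ha
      rw [hg] at this
      simp only [has, if_false] at this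
      have h0 : (s16coeff Δ (m : X) a : ℤ) = 0 := neg_eq_zero.mp this.symm
      exact_mod_cast h0
    · intro h
      rw [coeff_spec m]
      refine AddSubgroup.sum_mem _ fun a ha => ?_
      by_cases hs : a ∈ σ
      · exact AddSubgroup.nsmul_mem _ (AddSubgroup.neg_mem _ (AddSubgroup.subset_closure hs)) _
      · rw [h a ha hs, zero_smul]
        exact AddSubgroup.zero_mem _
  -- characterization of membership in Z σ
  have char : ∀ σ : Finset X, σ ⊆ τ →
      ∀ z : {z : ↥M → ℝ≥0 // z 0 = 1 ∧ ∀ a b : ↥M, z (a + b) = z a * z b},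
      (z ∈ Z σ ↔ ∀ a ∈ Δ, (z.1 (negM a) ≠ 0 ↔ a ∈ σ)) := by
    intro σ hστ z
    have hσΔ : σ ⊆ Δ := hστ.trans hτ
    rw [hZ σ]
    simp only [Set.mem_setOf_eq]
    constructor
    · intro h a ha
      have h1 := h (-a) (hnegΦ a ha)
      have harg : negM a = (⟨-a, hmem _ (hnegΦ a ha)⟩ : ↥M) :=
        Subtype.ext (negM_coe a ha)
      rw [congrArg z.1 harg, h1]
      constructor
      · intro hcl
        have h2 := (span_iff σ hστ ⟨-a, hmem _ (hnegΦ a ha)⟩).mp hcl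
        by_contra hns
        have h3 := h2 a ha hns
        have h4 : s16coeff Δ ((⟨-a, hmem _ (hnegΦ a ha)⟩ : ↥M) : X) a = 1 := by
          have h5 := coeff_uniq ⟨-a, hmem _ (hnegΦ a ha)⟩
            (fun b => if b = a then 1 else 0) ?_ a ha
          · rw [h5]; simp
          · simp [ite_smul, Finset.sum_ite_eq' Δ a, ha]
        rw [h4] at h3
        exact one_ne_zero h3
      · intro hs
        exact AddSubgroup.neg_mem _ (AddSubgroup.subset_closure hs)
    · intro h α hα
      rw [show z.1 ⟨α, hmem α hα⟩ = z.1 ⟨α, hmem α hα⟩ from rfl,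
        heval z ⟨α, hmem α hα⟩]
      rw [show (α ∈ AddSubgroup.closure (σ : Set X)) ↔
        ∀ a ∈ Δ, a ∉ σ → s16coeff Δ ((⟨α, hmem α hα⟩ : ↥M) : X) a = 0 from
        span_iff σ hστ ⟨α, hmem α hα⟩]
      rw [Finset.prod_ne_zero_iff]
      constructor
      · intro hp a ha hns
        by_contra hc
        have hx := hp a ha
        have hz0 : z.1 (negM a) = 0 := by
          by_contra hne
          exact hns ((h a ha).mp hne)
        rw [hz0, zero_pow hc] at hx
        exact hx rfl
      · intro hp a ha
        by_cases hc : s16coeff Δ ((⟨α, hmem α hα⟩ : ↥M) : X) a = 0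
        · rw [hc, pow_zero]
          exact one_ne_zero
        · have hs : a ∈ σ := by
            by_contra hns
            exact hc (hp a ha hns)
          exact pow_ne_zero _ ((h a ha).mpr hs)
  -- the union as a support condition
  have hU : (⋃ σ ∈ {σ : Finset X | σ ⊆ τ}, Z σ) =
      {z : {z : ↥M → ℝ≥0 // z 0 = 1 ∧ ∀ a b : ↥M, z (a + b) = z a * z b} |
        ∀ a ∈ Δ, a ∉ τ → z.1 (negM a) = 0} := by
    ext z
    simp only [Set.mem_iUnion, Set.mem_setOf_eq, exists_prop]
    constructor
    · rintro ⟨σ, hστ, hzσ⟩ a ha hat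
      have hch := (char σ hστ z).mp hzσ
      have hns : a ∉ σ := fun hs => hat (hστ hs)
      by_contra hne
      exact hns ((hch a ha).mp hne)
    · intro h
      refine ⟨τ.filter (fun a => z.1 (negM a) ≠ 0), Finset.filter_subset _ _, ?_⟩
      rw [char _ (Finset.filter_subset _ _) z]
      intro a ha
      simp only [Finset.mem_filter]
      constructor
      · intro hne
        refine ⟨?_, hne⟩
        by_contra hat
        exact hne (h a ha hat)
      · rintro ⟨-, hne⟩
        exact hne
  -- the support condition is closed
  have hcl : IsClosed {z : {z : ↥M → ℝ≥0 // z 0 = 1 ∧ ∀ a b : ↥M, z (a + b) = z a * z b} |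
      ∀ a ∈ Δ, a ∉ τ → z.1 (negM a) = 0} := by
    have he : {z : {z : ↥M → ℝ≥0 // z 0 = 1 ∧ ∀ a b : ↥M, z (a + b) = z a * z b} |
        ∀ a ∈ Δ, a ∉ τ → z.1 (negM a) = 0} =
        ⋂ a ∈ Δ, ⋂ (_ : a ∉ τ),
          {z : {z : ↥M → ℝ≥0 // z 0 = 1 ∧ ∀ a b : ↥M, z (a + b) = z a * z b} |
            z.1 (negM a) = 0} := by
      ext z
      simp
    rw [he]
    refine isClosed_iInter fun a => isClosed_iInter fun _ => isClosed_iInter fun _ => ?_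
    exact isClosed_eq ((continuous_apply (negM a)).comp continuous_subtype_val) continuous_const
  refine Set.Subset.antisymm ?_ ?_
  · rw [hU]
    refine closure_minimal ?_ hcl
    intro z hz a ha hat
    have hch := (char τ (subset_refl τ) z).mp hz
    by_contra hne
    exact hat ((hch a ha).mp hne)
  · intro z hz
    rw [hU] at hz
    -- approximation: perturb z to land in Z τ
    set c : ℝ≥0 → X → ℝ≥0 := fun t a =>
      if z.1 (negM a) ≠ 0 then z.1 (negM a) else if a ∈ τ then t else 0 with hcdef
    set w : ℝ≥0 → {z : ↥M → ℝ≥0 // z 0 = 1 ∧ ∀ a b : ↥M, z (a + b) = z a * z b} :=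
      fun t => ⟨Fc (c t), F_zero _, F_add _⟩ with hwdef
    have hc0 : ∀ a, c 0 a = z.1 (negM a) := by
      intro a
      rw [hcdef]
      by_cases h1 : z.1 (negM a) ≠ 0
      · simp [h1]
      · push_neg at h1
        simp [h1]
    have hw0 : w 0 = z := by
      rw [hwdef]
      apply Subtype.ext
      funext m
      simp only
      rw [hFc]
      simp only
      rw [heval z m]
      exact Finset.prod_congr rfl fun a _ => by rw [hc0 a]
    have hcont : Continuous w := by
      rw [hwdef]
      refine Continuous.subtype_mk ?_ _
      refine continuous_pi fun m => ?_
      rw [hFc]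
      simp only
      refine continuous_finset_prod Δ fun a _ => Continuous.pow ?_ _
      rw [hcdef]
      by_cases h1 : z.1 (negM a) ≠ 0
      · simp only [if_pos h1]
        exact continuous_const
      · simp only [if_neg h1]
        by_cases h2 : a ∈ τ
        · simpa [h2] using continuous_id'
        · simp only [h2, if_false]
          exact continuous_const
    have hmemZ : ∀ t ∈ Set.Ioi (0 : ℝ≥0), w t ∈ Z τ := by
      intro t ht
      rw [char τ (subset_refl τ) (w t)]
      intro a ha
      have hwt : (w t).1 (negM a) = c t a := F_negM (c t) a ha
      rw [hwt, hcdef]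
      simp only
      by_cases h1 : z.1 (negM a) ≠ 0
      · rw [if_pos h1]
        constructor
        · intro _
          by_contra hat
          exact h1 (hz a ha hat)
        · intro _
          exact h1
      · rw [if_neg h1]
        by_cases h2 : a ∈ τ
        · rw [if_pos h2]
          exact ⟨fun _ => h2, fun _ => ne_of_gt ht⟩
        · rw [if_neg h2]
          exact ⟨fun hne => absurd rfl hne, fun hat => absurd hat h2⟩
    have htend : Filter.Tendsto w (𝓝[>] (0 : ℝ≥0)) (𝓝 z) := by
      rw [← hw0]
      exact (hcont.tendsto 0).mono_left nhdsWithin_le_nhds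
    exact mem_closure_of_tendsto htend (eventually_nhdsWithin_of_forall hmemZ)
end
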